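/- arXiv:2206.09400 — 3 statements merged into one kernel-verified Lean document; each statement's English description precedes it below -/
import Mathlib

section
/- Let T be a Hom-finite Krull-Schmidt triangulated K-category, I a functorially finite ideal of T, and X --f--> Y --g--> Z --h--> X[1] a distinguished triangle. Then g is a right I-approximation of Z if and only if h is a left Gh_I-approximation of Z; moreover g is an I-sink map if and only if h is a Gh_I-source map. -/
open CategoryTheory CategoryTheory.Limits CategoryTheory.Pretriangulated

universe v u

variable {C : Type u} [Category.{v} C]

/-- An ideal of a preadditive category: an additive sub-bifunctor of `Hom(-,-)`. -/
structure CatIdeal (C : Type u) [Category.{v} C] [Preadditive C] where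
  carrier : ∀ {X Y : C}, Set (X ⟶ Y)
  add_mem : ∀ {X Y : C} {f g : X ⟶ Y}, f ∈ carrier → g ∈ carrier → f + g ∈ carrier
  zero_mem : ∀ {X Y : C}, (0 : X ⟶ Y) ∈ carrier
  neg_mem : ∀ {X Y : C} {f : X ⟶ Y}, f ∈ carrier → -f ∈ carrier
  comp_left : ∀ {X Y Z : C} (f : X ⟶ Y) {g : Y ⟶ Z}, g ∈ carrier → f ≫ g ∈ carrier
  comp_right : ∀ {X Y Z : C} {f : X ⟶ Y} (g : Y ⟶ Z), f ∈ carrier → f ≫ g ∈ carrier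

variable [Preadditive C]

/-- `h` is an `I`-ghost: `i ≫ h = 0` for every composable `i ∈ I`. -/
def IsGhost (I : CatIdeal C) {A B : C} (h : A ⟶ B) : Prop :=
  ∀ {W : C} (i : W ⟶ A), i ∈ I.carrier → i ≫ h = 0

/-- `g ∈ I` is a right `I`-approximation of its target. -/
def IsRightApprox (I : CatIdeal C) {A B : C} (g : A ⟶ B) : Prop :=
  g ∈ I.carrier ∧ ∀ {X : C} (i : X ⟶ B), i ∈ I.carrier → ∃ j : X ⟶ A, j ≫ g = i

/-- `g` is an `I`-sink map: a right minimal right `I`-approximation. -/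
def IsISinkMap (I : CatIdeal C) {A B : C} (g : A ⟶ B) : Prop :=
  IsRightApprox I g ∧ ∀ u : A ⟶ A, u ≫ g = g → IsIso u

/-- `h` is a left `Gh_I`-approximation of its source. -/
def IsLeftGhostApprox (I : CatIdeal C) {B W : C} (h : B ⟶ W) : Prop :=
  IsGhost I h ∧ ∀ {V : C} (j : B ⟶ V), IsGhost I j → ∃ t : W ⟶ V, h ≫ t = j

/-- `h` is a `Gh_I`-source map: a left minimal left `Gh_I`-approximation. -/
def IsGhostSourceMap (I : CatIdeal C) {B W : C} (h : B ⟶ W) : Prop :=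
  IsLeftGhostApprox I h ∧ ∀ u : W ⟶ W, h ≫ u = h → IsIso u

/-- `I` is functorially finite. -/
def FunctoriallyFinite (I : CatIdeal C) : Prop :=
  (∀ T₀ : C, ∃ (X : C) (i : X ⟶ T₀), i ∈ I.carrier ∧
      ∀ {X' : C} (j : X' ⟶ T₀), j ∈ I.carrier → ∃ t : X' ⟶ X, t ≫ i = j) ∧
  (∀ T₀ : C, ∃ (Y : C) (r : T₀ ⟶ Y), r ∈ I.carrier ∧
      ∀ {Y' : C} (s : T₀ ⟶ Y'), s ∈ I.carrier → ∃ t : Y ⟶ Y', r ≫ t = s)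

/-- Let `X ⟶ Y ⟶ Z ⟶ X[1]` be a distinguished triangle in a Hom-finite Krull-Schmidt
triangulated `K`-category and `I` a functorially finite ideal.  Then `g` is a right
`I`-approximation of `Z` iff `h` is a left `Gh_I`-approximation of `Z`; moreover `g` is
an `I`-sink map iff `h` is a `Gh_I`-source map. -/
theorem rightApprox_iff_leftGhostApprox_of_functoriallyFinite
    (K : Type*) [Field K] [Linear K C] [HasZeroObject C]
    [HasShift C ℤ] [∀ n : ℤ, (shiftFunctor C n).Additive] [Pretriangulated C]
    [∀ X Y : C, FiniteDimensional K (X ⟶ Y)] [IsIdempotentComplete C]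
    (I : CatIdeal C) (hI : FunctoriallyFinite I)
    {X Y Z : C} (f : X ⟶ Y) (g : Y ⟶ Z) (h : Z ⟶ X⟦(1 : ℤ)⟧)
    (hT : Triangle.mk f g h ∈ distTriang C) :
    (IsRightApprox I g ↔ IsLeftGhostApprox I h) ∧
    (IsISinkMap I g ↔ IsGhostSourceMap I h) := by
  have gh0 : g ≫ h = 0 := comp_distTriang_mor_zero₂₃ _ hT
  have main : IsRightApprox I g ↔ IsLeftGhostApprox I h := by
    constructor
    · rintro ⟨hgI, hfac⟩
      constructor
      · intro W i hi
        obtain ⟨j, hj⟩ := hfac i hi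
        rw [← hj, Category.assoc, gh0, Limits.comp_zero]
      · intro V j hj
        have hgj : g ≫ j = 0 := hj g hgI
        obtain ⟨t, ht⟩ := Triangle.yoneda_exact₃ _ hT j hgj
        exact ⟨t, ht.symm⟩
    · rintro ⟨hgh, hfac⟩
      obtain ⟨X₀, i, hiI, hiapp⟩ := hI.1 Z
      obtain ⟨Cn, h', d, hT'⟩ := Pretriangulated.distinguished_cocone_triangle i
      -- `h'` is an `I`-ghost
      have hih' : i ≫ h' = 0 := comp_distTriang_mor_zero₁₂ _ hT'
      have hgh' : IsGhost I h' := by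
        intro W j hj
        obtain ⟨t, ht⟩ := hiapp j hj
        rw [← ht, Category.assoc, hih', Limits.comp_zero]
      -- factor `h'` through `h`
      obtain ⟨b, hb⟩ := hfac h' hgh'
      -- hence `g ≫ h' = 0`, so `g` factors through `i`, so `g ∈ I`
      have hgh'0 : g ≫ h' = 0 := by
        rw [← hb, ← Category.assoc, gh0, Limits.zero_comp]
      obtain ⟨s, hs⟩ := Triangle.coyoneda_exact₂ _ hT' g hgh'0
      have hgI : g ∈ I.carrier := by
        rw [hs]; exact I.comp_left s hiI
      refine ⟨hgI, ?_⟩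
      intro W j hj
      have : j ≫ h = 0 := hgh j hj
      obtain ⟨k, hk⟩ := Triangle.coyoneda_exact₃ _ hT j this
      exact ⟨k, hk.symm⟩
  refine ⟨main, ?_⟩
  constructor
  · rintro ⟨hra, hmin⟩
    refine ⟨main.mp hra, ?_⟩
    intro u hu
    -- complete (𝟙 Z, u) on the twice-rotated triangle
    have hTRR := rot_of_distTriang _ (rot_of_distTriang _ hT)
    obtain ⟨φ, hφ₁, hφ₂⟩ := Pretriangulated.complete_distinguished_triangle_morphism
      ((Triangle.mk f g h).rotate.rotate) ((Triangle.mk f g h).rotate.rotate)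
      hTRR hTRR (𝟙 Z) u (by change h ≫ u = 𝟙 Z ≫ h; simpa using hu)
    -- `φ = w⟦1⟧'` for some `w : Y ⟶ Y` with `w ≫ g = g`
    have hφg : φ ≫ g⟦(1 : ℤ)⟧' = g⟦(1 : ℤ)⟧' := by
      change (-(g⟦(1 : ℤ)⟧')) ≫ (𝟙 Z)⟦(1 : ℤ)⟧' = φ ≫ (-(g⟦(1 : ℤ)⟧')) at hφ₂
      simp only [CategoryTheory.Functor.map_id, Category.comp_id,
        Preadditive.neg_comp, Preadditive.comp_neg, neg_inj] at hφ₂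
      exact neg_inj.mp ((Preadditive.comp_neg _ _).symm.trans hφ₂.symm)
    set w : Y ⟶ Y := (shiftFunctor C (1 : ℤ)).preimage φ with hw
    have hwφ : (shiftFunctor C (1 : ℤ)).map w = φ := (shiftFunctor C (1 : ℤ)).map_preimage φ
    have hwg : w ≫ g = g := by
      apply (shiftFunctor C (1 : ℤ)).map_injective
      rw [Functor.map_comp, hwφ]; exact hφg
    have : IsIso w := hmin w hwg
    have : IsIso φ := by rw [← hwφ]; exact Functor.map_isIso _ w
    -- morphism of the twice-rotated triangle with iso first and third components
    let ψ : (Triangle.mk f g h).rotate.rotate ⟶ (Triangle.mk f g h).rotate.rotate :=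
      { hom₁ := 𝟙 Z
        hom₂ := u
        hom₃ := φ
        comm₁ := by change h ≫ u = 𝟙 Z ≫ h; simpa using hu
        comm₂ := hφ₁
        comm₃ := hφ₂ }
    have : IsIso ψ.hom₂ := isIso₂_of_isIso₁₃ ψ hTRR hTRR (show IsIso (𝟙 Z) from IsIso.id Z)
      (by dsimp [ψ]; infer_instance)
    exact this
  · rintro ⟨hla, hmin⟩
    refine ⟨main.mpr hla, ?_⟩
    intro u hu
    have hTR := rot_of_distTriang _ hT
    obtain ⟨c, hc₁, hc₂⟩ := Pretriangulated.complete_distinguished_triangle_morphism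
      ((Triangle.mk f g h).rotate) ((Triangle.mk f g h).rotate)
      hTR hTR u (𝟙 Z) (by change g ≫ 𝟙 Z = u ≫ g; simpa using hu.symm)
    have hhc : h ≫ c = h := by change h ≫ c = 𝟙 Z ≫ h at hc₁; simpa using hc₁
    have : IsIso c := hmin c hhc
    let ψ : (Triangle.mk f g h).rotate ⟶ (Triangle.mk f g h).rotate :=
      { hom₁ := u
        hom₂ := 𝟙 Z
        hom₃ := c
        comm₁ := by change g ≫ 𝟙 Z = u ≫ g; simpa using hu.symm
        comm₂ := hc₁
        comm₃ := hc₂ }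
    have : IsIso ψ.hom₁ := isIso₁_of_isIso₂₃ ψ hTR hTR (show IsIso (𝟙 Z) from IsIso.id Z)
      (by dsimp [ψ]; infer_instance)
    exact this
end

section
/- Let T be a Hom-finite Krull-Schmidt triangulated K-category over an algebraically closed field, I an Auslander-Reiten ideal, X --u--> Y --v--> Z --w--> X[1] a non-trivial I-mutation triangle with X, Z indecomposable and not in Ob(I), and W an indecomposable object. Write Y = ⊕_{i=1}^n Y_i^{m_i} with the Y_i pairwise non-isomorphic indecomposables. Then Irr^-_I(X, W) := (I/JI)(X, W) is nonzero if and only if W ≅ Y_i for some i, and in that case m_i = dim_K Irr^-_I(X, Y_i). -/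
open CategoryTheory CategoryTheory.Limits CategoryTheory.Pretriangulated

universe v u

variable {C : Type u} [Category.{v} C]

variable [Preadditive C]

/-- `f ∈ I` is a left `I`-approximation of its source. -/
def IsLeftApprox (I : CatIdeal C) {A B : C} (f : A ⟶ B) : Prop :=
  f ∈ I.carrier ∧ ∀ {W : C} (i : A ⟶ W), i ∈ I.carrier → ∃ t : B ⟶ W, f ≫ t = i

/-- `f` is an `I`-source map: a left minimal left `I`-approximation. -/
def IsISourceMap (I : CatIdeal C) {A B : C} (f : A ⟶ B) : Prop :=
  IsLeftApprox I f ∧ ∀ u : B ⟶ B, f ≫ u = f → IsIso u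

/-- `h` is left `I`-irreducible. -/
def LeftIIrreducible (I : CatIdeal C) {X Y : C} (h : X ⟶ Y) : Prop :=
  h ∈ I.carrier ∧ ∀ {Z : C} (h₁ : X ⟶ Z) (h₂ : Z ⟶ Y), h₁ ≫ h₂ = h → h₁ ∈ I.carrier →
    ∃ s : Y ⟶ Z, s ≫ h₂ = 𝟙 Y

variable [HasZeroObject C] [HasShift C ℤ] [∀ n : ℤ, (shiftFunctor C n).Additive]
  [Pretriangulated C]

/-- `I` is an Auslander-Reiten ideal: it is functorially finite and `(T, T)` is an
`I`-mutation pair. -/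
def IsARIdeal (I : CatIdeal C) : Prop :=
  FunctoriallyFinite I ∧
  (∀ X : C, ∃ (M Y : C) (f : X ⟶ M) (g : M ⟶ Y) (h : Y ⟶ X⟦(1 : ℤ)⟧),
      Triangle.mk f g h ∈ (distTriang C) ∧ IsLeftApprox I f ∧ IsRightApprox I g) ∧
  (∀ Y : C, ∃ (Z N : C) (u : Z ⟶ N) (v : N ⟶ Y) (w : Y ⟶ Z⟦(1 : ℤ)⟧),
      Triangle.mk u v w ∈ (distTriang C) ∧ IsLeftApprox I u ∧ IsRightApprox I v)

/-- An object is indecomposable if it is nonzero and any biproduct decomposition of it is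
trivial. -/
def IndecomposableObj [HasBinaryBiproducts C] (X : C) : Prop :=
  ¬ IsZero X ∧ ∀ (Y Z : C), (X ≅ Y ⊞ Z) → IsZero Y ∨ IsZero Z



/-- `f` lies in the Jacobson radical of the category. -/
def InJacobsonRadical {X Y : C} (f : X ⟶ Y) : Prop :=
  ∀ g : Y ⟶ X, IsIso (𝟙 X - f ≫ g)

section Linear

variable (K : Type*) [Field K] [Linear K C]

/-- `I(X, Y)` as a `K`-submodule of `X ⟶ Y`. -/
def idealSubmodule (I : CatIdeal C) (X Y : C) : Submodule K (X ⟶ Y) where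
  carrier := I.carrier
  add_mem' := I.add_mem
  zero_mem' := I.zero_mem
  smul_mem' := by
    intro k f hf
    have h : k • f = f ≫ (k • 𝟙 Y) := by
      rw [Linear.comp_smul, Category.comp_id]
    rw [h]
    exact I.comp_right _ hf

/-- `(JI)(X, Y)` as a `K`-submodule of `X ⟶ Y`: the span of composites `j ∘ i` with
`i ∈ I` and `j` in the Jacobson radical. -/
def radCompSubmodule (I : CatIdeal C) (X Y : C) : Submodule K (X ⟶ Y) :=
  Submodule.span K {g : X ⟶ Y | ∃ (Z : C) (i : X ⟶ Z) (j : Z ⟶ Y),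
    i ∈ I.carrier ∧ InJacobsonRadical j ∧ i ≫ j = g}

/-- The space `Irr⁻_I(X, W) = (I/JI)(X, W)`. -/
abbrev IrrMinus (I : CatIdeal C) (X W : C) :=
  (idealSubmodule K I X W) ⧸
    ((radCompSubmodule K I X W).comap (idealSubmodule K I X W).subtype)

end Linear

section AuxRing

open Polynomial

/-- In a finite-dimensional algebra over an algebraically closed field in which the only
idempotents are `0` and `1`, every element is a scalar plus a nilpotent. -/
theorem exists_nilpotent_sub_algebraMap (K : Type*) [Field K] [IsAlgClosed K]
    {A : Type*} [Ring A] [Algebra K A] [Nontrivial A] [Module.Finite K A]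
    (hid : ∀ e : A, e * e = e → e = 0 ∨ e = 1) (a : A) :
    ∃ μ : K, IsNilpotent (a - algebraMap K A μ) := by
  have hInt : IsIntegral K a := Algebra.IsIntegral.isIntegral a
  set p := minpoly K a with hpdef
  have hmon : p.Monic := minpoly.monic hInt
  have hp0 : p ≠ 0 := hmon.ne_zero
  have hdeg : 0 < p.natDegree := minpoly.natDegree_pos hInt
  have hsplit : p.Splits := IsAlgClosed.splits p
  have hcard : Multiset.card p.roots = p.natDegree := splits_iff_card_roots.mp hsplit
  obtain ⟨μ, hμ⟩ : ∃ μ, μ ∈ p.roots := Multiset.card_pos_iff_exists_mem.mp (by omega)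
  have haevalp : Polynomial.aeval a p = 0 := minpoly.aeval K a
  have hall : ∀ ν ∈ p.roots, ν = μ := by
    intro ν hν
    by_contra hne
    set k := p.rootMultiplicity μ with hk
    have hkpos : 0 < k := (rootMultiplicity_pos hp0).mpr (isRoot_of_mem_roots hμ)
    obtain ⟨g, hpg, hnd⟩ := p.exists_eq_pow_rootMultiplicity_mul_and_not_dvd hp0 μ
    have hg0 : g ≠ 0 := by
      rintro rfl
      rw [mul_zero] at hpg
      exact hp0 hpg
    have hco : IsCoprime ((X - C μ) ^ k) g :=
      ((irreducible_X_sub_C μ).coprime_iff_not_dvd.mpr hnd).pow_left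
    obtain ⟨s, t, hst⟩ := hco
    set e := Polynomial.aeval a (t * g) with he
    have h1e : Polynomial.aeval a (s * (X - C μ) ^ k) = 1 - e := by
      have h := congrArg (Polynomial.aeval a) hst
      rw [map_add, map_one] at h
      exact eq_sub_of_add_eq h
    have hee : e * e = e := by
      have h0 : e * (1 - e) = 0 := by
        rw [← h1e, he, ← map_mul]
        have hmg : t * g * (s * (X - C μ) ^ k) = t * s * p := by
          rw [hpg]; ring
        rw [hmg, map_mul, haevalp, mul_zero]
      rw [mul_sub, mul_one] at h0
      exact (sub_eq_zero.mp h0).symm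
    rcases hid e hee with h0 | h1
    · have hsq : Polynomial.aeval a (s * (X - C μ) ^ k) = 1 := by rw [h1e, h0, sub_zero]
      have hgz : Polynomial.aeval a g = 0 := by
        have h2 : Polynomial.aeval a (g * (s * (X - C μ) ^ k)) = Polynomial.aeval a g := by
          rw [map_mul, hsq, mul_one]
        rw [← h2]
        have hgs : g * (s * (X - C μ) ^ k) = s * p := by rw [hpg]; ring
        rw [hgs, map_mul, haevalp, mul_zero]
      have hdvd : p ∣ g := minpoly.dvd K a hgz
      have hle : p.natDegree ≤ g.natDegree := natDegree_le_of_dvd hdvd hg0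
      have hq0 : ((X - C μ : K[X]) ^ k) ≠ 0 := pow_ne_zero _ (X_sub_C_ne_zero μ)
      have hdeq : p.natDegree = k + g.natDegree := by
        rw [hpg, natDegree_mul hq0 hg0, natDegree_pow, natDegree_X_sub_C, mul_one]
      omega
    · have hqz : Polynomial.aeval a ((X - C μ) ^ k) = 0 := by
        have h2 : Polynomial.aeval a ((X - C μ) ^ k * (t * g)) =
            Polynomial.aeval a ((X - C μ) ^ k) := by
          rw [map_mul, ← he, h1, mul_one]
        rw [← h2]
        have h3 : (X - C μ : K[X]) ^ k * (t * g) = t * p := by rw [hpg]; ring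
        rw [h3, map_mul, haevalp, mul_zero]
      have hdvd : p ∣ (X - C μ) ^ k := minpoly.dvd K a hqz
      have hνroot : eval ν p = 0 := isRoot_of_mem_roots hν
      obtain ⟨c, hc⟩ := hdvd
      have hq : ((ν : K) - μ) ^ k = 0 := by
        have h1' : eval ν ((X - C μ : K[X]) ^ k) = eval ν p * eval ν c := by
          rw [hc, eval_mul]
        rw [eval_pow, eval_sub, eval_X, eval_C] at h1'
        rw [h1', hνroot, zero_mul]
      exact hne (sub_eq_zero.mp ((pow_eq_zero_iff hkpos.ne').mp hq))
  have hrep : p.roots = Multiset.replicate (Multiset.card p.roots) μ :=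
    Multiset.eq_replicate_card.mpr hall
  have hprod : p = (X - C μ) ^ p.natDegree := by
    have h4 := hsplit.eq_prod_roots_of_monic hmon
    rw [hrep, Multiset.map_replicate, Multiset.prod_replicate] at h4
    rwa [hcard] at h4
  refine ⟨μ, p.natDegree, ?_⟩
  have h5 := haevalp
  rw [hprod, map_pow, map_sub, aeval_X, aeval_C] at h5
  exact h5

end AuxRing

section AuxCat

theorem isZero_of_isIso_zero {W : C} (h : IsIso (0 : W ⟶ W)) : IsZero W := by
  rw [IsZero.iff_id_eq_zero]
  calc 𝟙 W = (0 : W ⟶ W) ≫ inv (0 : W ⟶ W) := (IsIso.hom_inv_id _).symm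
  _ = 0 := zero_comp

/-- If `𝟙 P - a ≫ b` is invertible then so is `𝟙 Q - b ≫ a`. -/
theorem isIso_one_sub_swap {P Q : C} (a : P ⟶ Q) (b : Q ⟶ P)
    (h : IsIso (𝟙 P - a ≫ b)) : IsIso (𝟙 Q - b ≫ a) := by
  set c := inv (𝟙 P - a ≫ b) with hc
  have h1 : a ≫ b ≫ c = c - 𝟙 P := by
    have := IsIso.hom_inv_id (𝟙 P - a ≫ b)
    rw [Preadditive.sub_comp, Category.id_comp, Category.assoc] at this
    rw [eq_sub_iff_add_eq, ← this]
    abel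
  have h2 : c ≫ a ≫ b = c - 𝟙 P := by
    have := IsIso.inv_hom_id (𝟙 P - a ≫ b)
    rw [Preadditive.comp_sub, Category.comp_id] at this
    rw [eq_sub_iff_add_eq, ← this]
    abel
  refine ⟨⟨𝟙 Q + b ≫ c ≫ a, ?_, ?_⟩⟩
  · have key : b ≫ a ≫ b ≫ c ≫ a = b ≫ c ≫ a - b ≫ a := by
      calc b ≫ a ≫ b ≫ c ≫ a = b ≫ (a ≫ b ≫ c) ≫ a := by simp only [Category.assoc]
      _ = b ≫ (c - 𝟙 P) ≫ a := by rw [h1]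
      _ = b ≫ c ≫ a - b ≫ a := by
          simp only [Preadditive.sub_comp, Preadditive.comp_sub, Category.id_comp]
    simp only [Preadditive.sub_comp, Preadditive.comp_add, Preadditive.add_comp,
      Category.id_comp, Category.comp_id, Category.assoc, key]
    abel
  · have key : b ≫ (c ≫ a ≫ b) ≫ a = b ≫ c ≫ a - b ≫ a := by
      rw [h2]
      simp only [Preadditive.sub_comp, Preadditive.comp_sub, Category.id_comp]
    have key' : b ≫ c ≫ a ≫ b ≫ a = b ≫ c ≫ a - b ≫ a := by
      rw [← key]; simp only [Category.assoc]
    simp only [Preadditive.comp_sub, Preadditive.add_comp, Preadditive.comp_add,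
      Category.id_comp, Category.comp_id, Category.assoc, key']
    abel

theorem jac_zero {A B : C} : InJacobsonRadical (0 : A ⟶ B) := by
  intro g
  simp only [zero_comp, sub_zero]
  infer_instance

theorem jac_add {A B : C} {f f' : A ⟶ B} (hf : InJacobsonRadical f)
    (hf' : InJacobsonRadical f') : InJacobsonRadical (f + f') := by
  intro g
  have h1 : IsIso (𝟙 A - f ≫ g) := hf g
  have h2 : IsIso (𝟙 A - f' ≫ (g ≫ inv (𝟙 A - f ≫ g))) := hf' _
  have h3 : IsIso (𝟙 A - inv (𝟙 A - f ≫ g) ≫ (f' ≫ g)) := by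
    refine isIso_one_sub_swap _ _ ?_
    simpa only [Category.assoc] using h2
  have key : 𝟙 A - (f + f') ≫ g =
      (𝟙 A - f ≫ g) ≫ (𝟙 A - inv (𝟙 A - f ≫ g) ≫ (f' ≫ g)) := by
    rw [Preadditive.comp_sub, Category.comp_id, ← Category.assoc, IsIso.hom_inv_id,
      Category.id_comp, Preadditive.add_comp]
    abel
  rw [key]
  infer_instance

theorem jac_neg {A B : C} {f : A ⟶ B} (hf : InJacobsonRadical f) :
    InJacobsonRadical (-f) := by
  intro g
  have := hf (-g)
  simpa only [Preadditive.comp_neg, Preadditive.neg_comp, neg_neg] using this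

theorem jac_precomp {A' A B : C} (h : A' ⟶ A) {f : A ⟶ B} (hf : InJacobsonRadical f) :
    InJacobsonRadical (h ≫ f) := by
  intro g
  have h1 : IsIso (𝟙 A - f ≫ g ≫ h) := hf (g ≫ h)
  have := isIso_one_sub_swap (f ≫ g) h (by simpa only [Category.assoc] using h1)
  simpa only [Category.assoc] using this

theorem jac_postcomp {A B B' : C} {f : A ⟶ B} (h : B ⟶ B') (hf : InJacobsonRadical f) :
    InJacobsonRadical (f ≫ h) := by
  intro g
  have := hf (h ≫ g)
  simpa only [Category.assoc] using this

section LinearAux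

variable (K : Type*) [Field K] [Linear K C]

theorem jac_smul {A B : C} (k : K) {f : A ⟶ B} (hf : InJacobsonRadical f) :
    InJacobsonRadical (k • f) := by
  intro g
  have := hf (k • g)
  simpa only [Linear.smul_comp, Linear.comp_smul] using this

/-- The Jacobson radical `J(A, B)` as a `K`-submodule of `A ⟶ B`. -/
def radSubmodule (A B : C) : Submodule K (A ⟶ B) where
  carrier := {f | InJacobsonRadical f}
  add_mem' := jac_add
  zero_mem' := jac_zero
  smul_mem' := jac_smul K

@[simp] theorem mem_radSubmodule {A B : C} (f : A ⟶ B) :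
    f ∈ radSubmodule K A B ↔ InJacobsonRadical f := Iff.rfl

end LinearAux

/-- In an idempotent complete category with binary biproducts, an idempotent endomorphism
of an indecomposable object is `0` or the identity. -/
theorem indec_idem [HasBinaryBiproducts C] [IsIdempotentComplete C] {W : C}
    (hW : IndecomposableObj W) (p : W ⟶ W) (hp : p ≫ p = p) : p = 0 ∨ p = 𝟙 W := by
  obtain ⟨A, iA, eA, hA1, hA2⟩ := IsIdempotentComplete.idempotents_split W p hp
  have hq : (𝟙 W - p) ≫ (𝟙 W - p) = 𝟙 W - p := by
    simp only [Preadditive.sub_comp, Preadditive.comp_sub, Category.id_comp,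
      Category.comp_id, hp]
    abel
  obtain ⟨B, iB, eB, hB1, hB2⟩ := IsIdempotentComplete.idempotents_split W (𝟙 W - p) hq
  have hiAp : iA ≫ p = iA := by rw [← hA2, ← Category.assoc, hA1, Category.id_comp]
  have hiBq : iB ≫ (𝟙 W - p) = iB := by
    rw [← hB2, ← Category.assoc, hB1, Category.id_comp]
  have hpeB : p ≫ eB = 0 := by
    have h2 : p ≫ eB ≫ iB = 0 := by
      rw [hB2, Preadditive.comp_sub, Category.comp_id, hp, sub_self]
    calc p ≫ eB = p ≫ eB ≫ iB ≫ eB := by rw [hB1, Category.comp_id]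
    _ = (p ≫ eB ≫ iB) ≫ eB := by simp only [Category.assoc]
    _ = 0 := by rw [h2, zero_comp]
  have hqeA : (𝟙 W - p) ≫ eA = 0 := by
    have h2 : (𝟙 W - p) ≫ eA ≫ iA = 0 := by
      rw [hA2, Preadditive.sub_comp, Category.id_comp, hp, sub_self]
    calc (𝟙 W - p) ≫ eA = (𝟙 W - p) ≫ eA ≫ iA ≫ eA := by rw [hA1, Category.comp_id]
    _ = ((𝟙 W - p) ≫ eA ≫ iA) ≫ eA := by simp only [Category.assoc]
    _ = 0 := by rw [h2, zero_comp]
  have hiAeB : iA ≫ eB = 0 := by rw [← hiAp, Category.assoc, hpeB, comp_zero]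
  have hiBeA : iB ≫ eA = 0 := by rw [← hiBq, Category.assoc, hqeA, comp_zero]
  let iso : W ≅ A ⊞ B :=
    { hom := biprod.lift eA eB
      inv := biprod.desc iA iB
      hom_inv_id := by
        rw [biprod.lift_desc, hA2, hB2]
        abel
      inv_hom_id := by
        apply biprod.hom_ext
        · apply biprod.hom_ext'
          · simp [hA1]
          · simp [hiBeA]
        · apply biprod.hom_ext'
          · simp [hiAeB]
          · simp [hB1] }
  rcases hW.2 A B iso with hz | hz
  · left
    rw [← hA2, hz.eq_of_tgt eA 0, zero_comp]
  · right
    have : 𝟙 W - p = 0 := by rw [← hB2, hz.eq_of_tgt eB 0, zero_comp]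
    rw [← sub_eq_zero]
    rw [← neg_sub, this, neg_zero]

section Structure

variable (K : Type*) [Field K] [IsAlgClosed K] [Linear K C]
variable [HasBinaryBiproducts C] [IsIdempotentComplete C]

theorem end_exists_nilpotent {W : C} [FiniteDimensional K (W ⟶ W)]
    (hW : IndecomposableObj W) (a : W ⟶ W) :
    ∃ μ : K, @IsNilpotent (End W) _ _ (a - μ • 𝟙 W) := by
  haveI : Nontrivial (End W) := by
    refine ⟨𝟙 W, 0, fun h => hW.1 ?_⟩
    exact (IsZero.iff_id_eq_zero W).mpr h
  haveI : Module.Finite K (End W) := ‹FiniteDimensional K (W ⟶ W)›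
  have hid : ∀ e : End W, e * e = e → e = 0 ∨ e = 1 := by
    intro e hee
    have h : (e : W ⟶ W) ≫ e = e := hee
    exact indec_idem hW e h
  obtain ⟨μ, hμ⟩ := exists_nilpotent_sub_algebraMap K hid (a : End W)
  refine ⟨μ, ?_⟩
  have halg : (algebraMap K (End W) μ) = (μ • 𝟙 W : W ⟶ W) := by
    rw [Algebra.algebraMap_eq_smul_one]
    rfl
  rwa [halg] at hμ

theorem end_isIso_or_nilpotent {W : C} [FiniteDimensional K (W ⟶ W)]
    (hW : IndecomposableObj W) (a : W ⟶ W) :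
    IsIso a ∨ @IsNilpotent (End W) _ _ a := by
  obtain ⟨μ, hμ⟩ := end_exists_nilpotent K hW a
  by_cases hμ0 : μ = 0
  · right
    have h0 : (a - μ • 𝟙 W : W ⟶ W) = a := by rw [hμ0, zero_smul, sub_zero]
    rwa [h0] at hμ
  · left
    rw [← isUnit_iff_isIso]
    have h1 : IsUnit (algebraMap K (End W) μ) :=
      (algebraMap K (End W)).isUnit_map (isUnit_iff_ne_zero.mpr hμ0)
    have halg : (algebraMap K (End W) μ) = (μ • 𝟙 W : W ⟶ W) := by
      rw [Algebra.algebraMap_eq_smul_one]; rfl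
    let b : End W := a - μ • 𝟙 W
    have hbnil : IsNilpotent b := hμ
    have hcomm : Commute b (algebraMap K (End W) μ) := (Algebra.commutes μ b).symm
    have h2 := hbnil.isUnit_add_left_of_commute h1 hcomm
    have h3 : (algebraMap K (End W) μ) + b = (a : End W) := by
      rw [halg]
      show (μ • 𝟙 W : W ⟶ W) + (a - μ • 𝟙 W) = a
      abel
    rwa [h3] at h2

theorem jac_of_nilpotent {W : C} [FiniteDimensional K (W ⟶ W)]
    (hW : IndecomposableObj W) {a : W ⟶ W} (ha : @IsNilpotent (End W) _ _ a) :
    InJacobsonRadical a := by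
  intro g
  rcases end_isIso_or_nilpotent K hW (a ≫ g) with hiso | hnil
  · exfalso
    obtain ⟨k, hk⟩ := ha
    haveI := hiso
    set r : W ⟶ W := g ≫ inv (a ≫ g) with hr
    have har : a ≫ r = 𝟙 W := by rw [hr, ← Category.assoc, IsIso.hom_inv_id]
    have hidem : (r ≫ a) ≫ (r ≫ a) = r ≫ a := by
      rw [Category.assoc, ← Category.assoc a r a, har, Category.id_comp]
    rcases indec_idem hW (r ≫ a) hidem with h0 | h1
    · have ha0 : a = 0 := by
        calc a = (a ≫ r) ≫ a := by rw [har, Category.id_comp]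
        _ = a ≫ (r ≫ a) := by rw [Category.assoc]
        _ = 0 := by rw [h0, comp_zero]
      apply hW.1
      rw [IsZero.iff_id_eq_zero, ← har, ha0, zero_comp]
    · -- `a` is an isomorphism, contradicting nilpotency
      have hiso' : IsIso a := ⟨⟨r, har, h1⟩⟩
      let xa : End W := a
      have hu : IsUnit xa := (isUnit_iff_isIso xa).mpr hiso'
      have hup : IsUnit (xa ^ k) := hu.pow k
      have hxk : xa ^ k = 0 := hk
      rw [hxk] at hup
      rcases hup with ⟨v, hv⟩
      apply hW.1
      rw [IsZero.iff_id_eq_zero]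
      have h10 : (1 : End W) = 0 := by
        calc (1 : End W) = ↑v * ↑v⁻¹ := by rw [Units.mul_inv]
        _ = 0 * ↑v⁻¹ := by rw [hv]
        _ = 0 := by rw [zero_mul]
      exact h10
  · let x : End W := a ≫ g
    have hx : IsNilpotent x := hnil
    have h4 : IsUnit (1 - x) := hx.isUnit_one_sub
    exact (isUnit_iff_isIso (1 - x)).mp h4

theorem jac_iff_not_isIso {W : C} [FiniteDimensional K (W ⟶ W)]
    (hW : IndecomposableObj W) (a : W ⟶ W) :
    InJacobsonRadical a ↔ ¬ IsIso a := by
  constructor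
  · intro h hiso
    haveI := hiso
    have := h (inv a)
    rw [IsIso.hom_inv_id, sub_self] at this
    exact hW.1 (isZero_of_isIso_zero this)
  · intro hni
    rcases end_isIso_or_nilpotent K hW a with hiso | hnil
    · exact absurd hiso hni
    · exact jac_of_nilpotent K hW hnil

theorem jac_of_no_iso {W₁ W₂ : C} [FiniteDimensional K (W₁ ⟶ W₁)]
    (h1 : IndecomposableObj W₁) (h2 : IndecomposableObj W₂)
    (hno : IsEmpty (W₁ ≅ W₂)) (f : W₁ ⟶ W₂) : InJacobsonRadical f := by
  intro g
  rcases end_isIso_or_nilpotent K h1 (f ≫ g) with hiso | hnil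
  · exfalso
    haveI := hiso
    set h : W₂ ⟶ W₁ := g ≫ inv (f ≫ g) with hh
    have hfh : f ≫ h = 𝟙 W₁ := by rw [hh, ← Category.assoc, IsIso.hom_inv_id]
    have hidem : (h ≫ f) ≫ (h ≫ f) = h ≫ f := by
      rw [Category.assoc, ← Category.assoc f h f, hfh, Category.id_comp]
    rcases indec_idem h2 (h ≫ f) hidem with hz | ho
    · apply h1.1
      rw [IsZero.iff_id_eq_zero]
      calc 𝟙 W₁ = (f ≫ h) ≫ (f ≫ h) := by rw [hfh, Category.id_comp]
      _ = f ≫ (h ≫ f) ≫ h := by simp only [Category.assoc]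
      _ = 0 := by rw [hz, zero_comp, comp_zero]
    · exact hno.false ⟨f, h, hfh, ho⟩
  · let x : End W₁ := f ≫ g
    have hx : IsNilpotent x := hnil
    have h4 : IsUnit (1 - x) := hx.isUnit_one_sub
    exact (isUnit_iff_isIso (1 - x)).mp h4

theorem jac_of_comp_zero {X' Y' V : C} [FiniteDimensional K (V ⟶ V)]
    (hV : IndecomposableObj V) (u : X' ⟶ Y')
    (hmin : ∀ q : Y' ⟶ Y', u ≫ q = u → IsIso q) {s : Y' ⟶ V} (hs : u ≫ s = 0) :
    InJacobsonRadical s := by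
  intro g
  rcases end_isIso_or_nilpotent K hV (g ≫ s) with hiso | hnil
  · exfalso
    haveI := hiso
    set t : V ⟶ Y' := inv (g ≫ s) ≫ g with ht
    have hts : t ≫ s = 𝟙 V := by rw [ht, Category.assoc, IsIso.inv_hom_id]
    have hust : u ≫ (𝟙 Y' - s ≫ t) = u := by
      rw [Preadditive.comp_sub, Category.comp_id, ← Category.assoc, hs, zero_comp, sub_zero]
    have hisoq : IsIso (𝟙 Y' - s ≫ t) := hmin _ hust
    have h0 : (s ≫ t) ≫ (𝟙 Y' - s ≫ t) = 0 := by
      rw [Preadditive.comp_sub, Category.comp_id]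
      have hxx : (s ≫ t) ≫ s ≫ t = s ≫ t := by
        rw [← Category.assoc, Category.assoc s t s, hts, Category.comp_id]
      rw [hxx, sub_self]
    have hst0 : s ≫ t = 0 := by
      have hcv := congrArg (fun x => x ≫ inv (𝟙 Y' - s ≫ t)) h0
      simpa only [Category.assoc, IsIso.hom_inv_id, Category.comp_id, zero_comp] using hcv
    apply hV.1
    rw [IsZero.iff_id_eq_zero]
    calc 𝟙 V = (t ≫ s) ≫ (t ≫ s) := by rw [hts, Category.id_comp]
    _ = t ≫ (s ≫ t) ≫ s := by simp only [Category.assoc]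
    _ = 0 := by rw [hst0, zero_comp, comp_zero]
  · let x : End V := g ≫ s
    have hx : IsNilpotent x := hnil
    have h4 : IsUnit (1 - x) := hx.isUnit_one_sub
    have h5 : IsIso (𝟙 V - g ≫ s) := (isUnit_iff_isIso (1 - x)).mp h4
    exact isIso_one_sub_swap g s h5

end Structure

end AuxCat


/-- Theorem on `I`-mutation triangles: for a non-trivial `I`-mutation triangle
`X ⟶ Y ⟶ Z ⟶ X[1]` with `Y = ⊕ᵢ Yᵢ^{mᵢ}` (the `Yᵢ` pairwise non-isomorphic
indecomposables) and `W` indecomposable: `Irr⁻_I(X, W) ≠ 0` iff `W ≅ Yᵢ` for some `i`,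
and in that case `mᵢ = dim_K Irr⁻_I(X, Yᵢ)`. -/
theorem mutationTriangle_irrMinus
    (K : Type*) [Field K] [IsAlgClosed K] [Linear K C]
    [∀ A B : C, FiniteDimensional K (A ⟶ B)] [IsIdempotentComplete C]
    [HasFiniteBiproducts C]
    (I : CatIdeal C) (hAR : IsARIdeal I)
    {X Y Z : C} (u : X ⟶ Y) (v : Y ⟶ Z) (w : Z ⟶ X⟦(1 : ℤ)⟧)
    (hT : Triangle.mk u v w ∈ distTriang C)
    (hX : IndecomposableObj X) (hZ : IndecomposableObj Z)
    (hXI : 𝟙 X ∉ I.carrier) (hZI : 𝟙 Z ∉ I.carrier)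
    (hu : IsISourceMap I u) (hv : IsISinkMap I v)
    (n : ℕ) (Y₀ : Fin n → C) (m : Fin n → ℕ) (hm : ∀ i, 0 < m i)
    (hY₀ : ∀ i, IndecomposableObj (Y₀ i))
    (hY₀' : ∀ i j, i ≠ j → IsEmpty (Y₀ i ≅ Y₀ j))
    (e : Y ≅ ⨁ (fun p : Σ i : Fin n, Fin (m i) => Y₀ p.1))
    (W : C) (hW : IndecomposableObj W) :
    (¬ (idealSubmodule K I X W ≤ radCompSubmodule K I X W) ↔
        ∃ i, Nonempty (W ≅ Y₀ i)) ∧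
    (∀ i : Fin n, Nonempty (W ≅ Y₀ i) →
        Module.finrank K (IrrMinus K I X (Y₀ i)) = m i) := by
  classical
  obtain ⟨⟨huI, huApprox⟩, huMin⟩ := hu
  haveI : HasBinaryBiproducts C := hasBinaryBiproducts_of_finite_biproducts C
  -- Kernel characterization: `u ≫ t ∈ (JI)(X, V)` iff `t` is in the radical.
  have hker : ∀ (V : C), IndecomposableObj V → ∀ t : Y ⟶ V,
      (u ≫ t ∈ radCompSubmodule K I X V ↔ InJacobsonRadical t) := by
    intro V hV t
    constructor
    · intro ht
      have hle : radCompSubmodule K I X V ≤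
          Submodule.map (Linear.leftComp (R := K) V u) (radSubmodule K Y V) := by
        refine Submodule.span_le.2 ?_
        rintro _ ⟨Z', i, j, hi, hj, rfl⟩
        obtain ⟨s, hsi⟩ := huApprox i hi
        refine ⟨s ≫ j, jac_precomp s hj, ?_⟩
        show u ≫ s ≫ j = i ≫ j
        rw [← hsi, Category.assoc]
      obtain ⟨r, hrJ, hru⟩ := hle ht
      have hru' : u ≫ r = u ≫ t := hru
      have h0 : u ≫ (t - r) = 0 := by
        rw [Preadditive.comp_sub, hru', sub_self]
      have hdiff : InJacobsonRadical (t - r) := jac_of_comp_zero K hV u huMin h0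
      have htr : t = (t - r) + r := by abel
      rw [htr]
      exact jac_add hdiff hrJ
    · intro ht
      exact Submodule.subset_span ⟨Y, u, t, huI, ht, rfl⟩
  constructor
  · constructor
    · -- nonzero implies W appears in Y
      intro hne
      by_contra hno
      apply hne
      intro f hf
      obtain ⟨t, htu⟩ := huApprox f hf
      have hcomp : ∀ p : (Σ i : Fin n, Fin (m i)),
          InJacobsonRadical (biproduct.ι (fun q : Σ i : Fin n, Fin (m i) => Y₀ q.1) p ≫
            e.inv ≫ t) := by
        intro p
        refine jac_of_no_iso K (hY₀ p.1) hW ⟨fun φ => hno ⟨p.1, ⟨φ.symm⟩⟩⟩ _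
      have ht' : t = ∑ p : (Σ i : Fin n, Fin (m i)),
          (e.hom ≫ biproduct.π (fun q : Σ i : Fin n, Fin (m i) => Y₀ q.1) p) ≫
            (biproduct.ι (fun q : Σ i : Fin n, Fin (m i) => Y₀ q.1) p ≫ e.inv ≫ t) := by
        have h1 : ∀ p : (Σ i : Fin n, Fin (m i)),
            (e.hom ≫ biproduct.π (fun q : Σ i : Fin n, Fin (m i) => Y₀ q.1) p) ≫
              (biproduct.ι (fun q : Σ i : Fin n, Fin (m i) => Y₀ q.1) p ≫ e.inv ≫ t)
            = e.hom ≫ ((biproduct.π (fun q : Σ i : Fin n, Fin (m i) => Y₀ q.1) p ≫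
                biproduct.ι (fun q : Σ i : Fin n, Fin (m i) => Y₀ q.1) p) ≫ (e.inv ≫ t)) := by
          intro p; simp only [Category.assoc]
        rw [Finset.sum_congr rfl (fun p _ => h1 p), ← Preadditive.comp_sum,
          ← Preadditive.sum_comp, biproduct.total, Category.id_comp, Iso.hom_inv_id_assoc]
      have htJ : InJacobsonRadical t := by
        have : t ∈ radSubmodule K Y W := by
          rw [ht']
          exact (radSubmodule K Y W).sum_mem fun p _ => jac_precomp _ (hcomp p)
        exact this
      rw [← htu]
      exact (hker W hW t).mpr htJ
    · -- W ≅ Y_i implies nonzero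
      rintro ⟨i, ⟨φ⟩⟩ hle
      have hp : (0 : ℕ) < m i := hm i
      have hgt : (φ.hom ≫ biproduct.ι (fun q : Σ i : Fin n, Fin (m i) => Y₀ q.1) ⟨i, ⟨0, hp⟩⟩
            ≫ e.inv) ≫
          (e.hom ≫ biproduct.π (fun q : Σ i : Fin n, Fin (m i) => Y₀ q.1) ⟨i, ⟨0, hp⟩⟩
            ≫ φ.inv) = 𝟙 W := by
        simp
      have hut : u ≫ (e.hom ≫ biproduct.π (fun q : Σ i : Fin n, Fin (m i) => Y₀ q.1) ⟨i, ⟨0, hp⟩⟩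
          ≫ φ.inv) ∈ idealSubmodule K I X W := I.comp_right _ huI
      have htJ : InJacobsonRadical (e.hom ≫
          biproduct.π (fun q : Σ i : Fin n, Fin (m i) => Y₀ q.1) ⟨i, ⟨0, hp⟩⟩ ≫ φ.inv) :=
        (hker W hW _).mp (hle hut)
      have h1 := isIso_one_sub_swap _ _
        (htJ (φ.hom ≫ biproduct.ι (fun q : Σ i : Fin n, Fin (m i) => Y₀ q.1) ⟨i, ⟨0, hp⟩⟩
          ≫ e.inv))
      rw [hgt, sub_self] at h1
      exact hW.1 (isZero_of_isIso_zero h1)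
  · -- dimension count
    intro i _
    set V : C := Y₀ i with hV
    -- the linear map Φ
    let L : (Y ⟶ V) →ₗ[K] (idealSubmodule K I X V) :=
      (Linear.leftComp (R := K) V u).codRestrict (idealSubmodule K I X V)
        (fun t => I.comp_right t huI)
    let Φ : (Y ⟶ V) →ₗ[K] IrrMinus K I X V :=
      (Submodule.mkQ _).comp L
    have hΦsurj : Function.Surjective Φ := by
      intro q
      obtain ⟨x, rfl⟩ := Submodule.mkQ_surjective _ q
      obtain ⟨f, hf⟩ := x
      obtain ⟨t, ht⟩ := huApprox f hf
      exact ⟨t, congrArg _ (Subtype.ext ht)⟩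
    have hΦker : LinearMap.ker Φ = radSubmodule K Y V := by
      ext t
      have h1 : (Φ t = 0) ↔ (L t ∈
          (radCompSubmodule K I X V).comap (idealSubmodule K I X V).subtype) := by
        rw [LinearMap.comp_apply, Submodule.mkQ_apply, Submodule.Quotient.mk_eq_zero]
      have h2 : (L t ∈ (radCompSubmodule K I X V).comap (idealSubmodule K I X V).subtype)
          ↔ u ≫ t ∈ radCompSubmodule K I X V := Iff.rfl
      rw [LinearMap.mem_ker, h1, h2, mem_radSubmodule]
      exact hker V (hY₀ i) t
    let e1 : ((Y ⟶ V) ⧸ radSubmodule K Y V) ≃ₗ[K] IrrMinus K I X V :=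
      (Submodule.quotEquivOfEq _ _ hΦker.symm).trans (Φ.quotKerEquivOfSurjective hΦsurj)
    -- the biproduct decomposition as a linear equivalence
    let F : (Y ⟶ V) ≃ₗ[K] (∀ p : (Σ i : Fin n, Fin (m i)), (Y₀ p.1 ⟶ V)) :=
      { toFun := fun f p => biproduct.ι (fun q : Σ i : Fin n, Fin (m i) => Y₀ q.1) p ≫
          e.inv ≫ f
        map_add' := by
          intro f g; funext p
          simp only [Preadditive.comp_add]
          rfl
        map_smul' := by
          intro k f; funext p
          simp only [Linear.comp_smul, RingHom.id_apply]
          rfl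
        invFun := fun c => e.hom ≫ biproduct.desc c
        left_inv := fun f => by
          have hd : biproduct.desc (fun p => biproduct.ι
              (fun q : Σ i : Fin n, Fin (m i) => Y₀ q.1) p ≫ e.inv ≫ f) = e.inv ≫ f :=
            biproduct.hom_ext' _ _ (fun p => by rw [biproduct.ι_desc])
          show e.hom ≫ _ = f
          rw [hd, Iso.hom_inv_id_assoc]
        right_inv := fun c => by
          funext p
          show biproduct.ι _ p ≫ e.inv ≫ (e.hom ≫ biproduct.desc c) = c p
          rw [Iso.inv_hom_id_assoc, biproduct.ι_desc] }
    have hmap : (radSubmodule K Y V).map (F : (Y ⟶ V) →ₗ[K] _) =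
        Submodule.pi Set.univ (fun p : (Σ i : Fin n, Fin (m i)) =>
          radSubmodule K (Y₀ p.1) V) := by
      ext c
      rw [Submodule.mem_map, Submodule.mem_pi]
      constructor
      · rintro ⟨f, hf, rfl⟩ p _
        exact jac_precomp _ (jac_precomp e.inv hf)
      · intro hc
        refine ⟨F.symm c, ?_, F.apply_symm_apply c⟩
        have hdesc : (F.symm c : Y ⟶ V) = ∑ p : (Σ i : Fin n, Fin (m i)),
            (e.hom ≫ biproduct.π (fun q : Σ i : Fin n, Fin (m i) => Y₀ q.1) p) ≫ c p := by
          show e.hom ≫ biproduct.desc c = _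
          have hd : biproduct.desc c = ∑ p : (Σ i : Fin n, Fin (m i)),
              biproduct.π (fun q : Σ i : Fin n, Fin (m i) => Y₀ q.1) p ≫ c p := by
            rw [← Category.id_comp (biproduct.desc c), ← biproduct.total,
              Preadditive.sum_comp]
            simp only [Category.assoc, biproduct.ι_desc]
          rw [hd, Preadditive.comp_sum]
          simp only [Category.assoc]
        show (F.symm c : Y ⟶ V) ∈ radSubmodule K Y V
        rw [hdesc]
        exact (radSubmodule K Y V).sum_mem fun p _ =>
          jac_precomp _ (hc p (Set.mem_univ p))
    let e2 := Submodule.Quotient.equiv (radSubmodule K Y V)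
      (Submodule.pi Set.univ (fun p : (Σ i : Fin n, Fin (m i)) =>
        radSubmodule K (Y₀ p.1) V)) F hmap
    let e3 := Submodule.quotientPi (fun p : (Σ i : Fin n, Fin (m i)) =>
      radSubmodule K (Y₀ p.1) V)
    have hfac : ∀ p : (Σ j : Fin n, Fin (m j)),
        Module.finrank K ((Y₀ p.1 ⟶ V) ⧸ radSubmodule K (Y₀ p.1) V) =
          if p.1 = i then 1 else 0 := by
      rintro ⟨j, c⟩
      by_cases hj : j = i
      · subst hj
        rw [if_pos rfl]
        refine finrank_eq_one (Submodule.Quotient.mk (𝟙 (Y₀ j))) ?_ ?_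
        · intro h0
          rw [Submodule.Quotient.mk_eq_zero] at h0
          exact (jac_iff_not_isIso K (hY₀ j) _).mp h0 inferInstance
        · intro w
          obtain ⟨a, rfl⟩ := Submodule.Quotient.mk_surjective _ w
          obtain ⟨μ, hμ⟩ := end_exists_nilpotent K (hY₀ j) a
          refine ⟨μ, ?_⟩
          rw [← Submodule.Quotient.mk_smul, Submodule.Quotient.eq]
          have hnil : InJacobsonRadical (a - μ • 𝟙 (Y₀ j)) :=
            jac_of_nilpotent K (hY₀ j) hμ
          have := jac_neg hnil
          simpa only [neg_sub, mem_radSubmodule] using this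
      · rw [if_neg hj]
        have htop : radSubmodule K (Y₀ j) V = ⊤ := by
          rw [Submodule.eq_top_iff']
          intro f
          exact jac_of_no_iso K (hY₀ j) (hY₀ i) (hY₀' j i hj) f
        haveI : Subsingleton ((Y₀ j ⟶ V) ⧸ radSubmodule K (Y₀ j) V) :=
          Submodule.Quotient.subsingleton_iff.mpr htop
        exact Module.finrank_zero_of_subsingleton
    calc Module.finrank K (IrrMinus K I X V)
        = Module.finrank K ((Y ⟶ V) ⧸ radSubmodule K Y V) := (LinearEquiv.finrank_eq e1).symm
      _ = Module.finrank K ((∀ p : (Σ i : Fin n, Fin (m i)), (Y₀ p.1 ⟶ V)) ⧸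
            Submodule.pi Set.univ (fun p : (Σ i : Fin n, Fin (m i)) =>
              radSubmodule K (Y₀ p.1) V)) := LinearEquiv.finrank_eq e2
      _ = Module.finrank K (∀ p : (Σ i : Fin n, Fin (m i)),
            (Y₀ p.1 ⟶ V) ⧸ radSubmodule K (Y₀ p.1) V) := LinearEquiv.finrank_eq e3
      _ = ∑ p : (Σ i : Fin n, Fin (m i)),
            Module.finrank K ((Y₀ p.1 ⟶ V) ⧸ radSubmodule K (Y₀ p.1) V) :=
          Module.finrank_pi_fintype K
      _ = ∑ p : (Σ j : Fin n, Fin (m j)), (if p.1 = i then 1 else 0) :=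
          Finset.sum_congr rfl (fun p _ => hfac p)
      _ = m i := by
          rw [← Finset.univ_sigma_univ, Finset.sum_sigma]
          have hstep : ∀ j : Fin n, (∑ _x : Fin (m j), if j = i then 1 else 0)
              = if j = i then m j else 0 := by
            intro j
            by_cases hj : j = i
            · simp [hj]
            · simp [hj]
          rw [Finset.sum_congr rfl (fun j _ => hstep j),
            Finset.sum_eq_single i (fun b _ hb => if_neg hb)
            (fun h => absurd (Finset.mem_univ i) h), if_pos rfl]
end

section
/- Let T be a Hom-finite Krull-Schmidt triangulated K-category, I an Auslander-Reiten ideal of T, X an indecomposable object not in Ob(I), f: X -> Y an I-source map, and p: Y -> Y' a split epimorphism with Y' ≠ 0. Then p∘f is left I-irreducible. -/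
open CategoryTheory CategoryTheory.Limits CategoryTheory.Pretriangulated

universe v u

variable {C : Type u} [Category.{v} C]

variable [Preadditive C]

variable [HasZeroObject C] [HasShift C ℤ] [∀ n : ℤ, (shiftFunctor C n).Additive]
  [Pretriangulated C]

/-- Let `I` be an Auslander-Reiten ideal of a Hom-finite Krull-Schmidt triangulated
`K`-category, `X` indecomposable with `𝟙 X ∉ I`, `f : X ⟶ Y` an `I`-source map and
`p : Y ⟶ Y'` a split epimorphism with `Y' ≠ 0`.  Then `p ∘ f` is left `I`-irreducible. -/
theorem leftIIrreducible_of_sourceMap_comp_splitEpi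
    (K : Type*) [Field K] [IsAlgClosed K] [Linear K C]
    [∀ A B : C, FiniteDimensional K (A ⟶ B)] [IsIdempotentComplete C]
    [HasBinaryBiproducts C]
    (I : CatIdeal C) (hAR : IsARIdeal I)
    {X Y Y' : C} (f : X ⟶ Y) (p : Y ⟶ Y') (s : Y' ⟶ Y)
    (hX : IndecomposableObj X) (hXI : 𝟙 X ∉ I.carrier)
    (hf : IsISourceMap I f) (hp : s ≫ p = 𝟙 Y') (hY' : ¬ IsZero Y') :
    LeftIIrreducible I (f ≫ p) := by
  obtain ⟨⟨hfI, happrox⟩, hmin⟩ := hf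
  refine ⟨I.comp_right p hfI, ?_⟩
  intro Z h₁ h₂ hfac h₁I
  obtain ⟨t, ht⟩ := happrox h₁ h₁I
  set u : Y ⟶ Y := t ≫ h₂ ≫ s + (𝟙 Y - p ≫ s) with hu
  have hfu : f ≫ u = f := by
    have h1 : f ≫ t ≫ h₂ = f ≫ p := by rw [← Category.assoc, ht, hfac]
    simp only [hu, Preadditive.comp_add, Preadditive.comp_sub, Category.comp_id,
      ← Category.assoc, h1]
    abel
  have hiso : IsIso u := hmin u hfu
  have hup : u ≫ p = t ≫ h₂ := by
    simp only [hu, Preadditive.add_comp, Preadditive.sub_comp, Category.id_comp,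
      Category.assoc, hp, Category.comp_id]
    abel
  have huc : u ≫ (𝟙 Y - p ≫ s) = 𝟙 Y - p ≫ s := by
    have : u ≫ p ≫ s = t ≫ h₂ ≫ s := by
      rw [← Category.assoc, hup, Category.assoc]
    rw [Preadditive.comp_sub, Category.comp_id, this, hu]
    abel
  have hvc : inv u ≫ (𝟙 Y - p ≫ s) = 𝟙 Y - p ≫ s := by
    conv_lhs => rw [← huc, ← Category.assoc, IsIso.inv_hom_id, Category.id_comp]
  have hse : s ≫ (𝟙 Y - p ≫ s) = (0 : Y' ⟶ Y) := by
    simp only [Preadditive.comp_sub, Category.comp_id, ← Category.assoc, hp,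
      Category.id_comp, sub_self]
  refine ⟨s ≫ inv u ≫ p ≫ s ≫ t, ?_⟩
  have h3 : (s ≫ inv u) ≫ (p ≫ s) = s ≫ inv u := by
    have h2 : (s ≫ inv u) ≫ (𝟙 Y - p ≫ s) = 0 := by
      rw [Category.assoc, hvc, hse]
    rw [Preadditive.comp_sub, Category.comp_id, sub_eq_zero] at h2
    exact h2.symm
  have key : s ≫ inv u ≫ (p ≫ s) ≫ u ≫ p = 𝟙 Y' := by
    calc s ≫ inv u ≫ (p ≫ s) ≫ u ≫ p
        = ((s ≫ inv u) ≫ (p ≫ s)) ≫ u ≫ p := by simp only [Category.assoc]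
      _ = (s ≫ inv u) ≫ u ≫ p := by rw [h3]
      _ = 𝟙 Y' := by rw [Category.assoc, IsIso.inv_hom_id_assoc, hp]
  calc (s ≫ inv u ≫ p ≫ s ≫ t) ≫ h₂
      = s ≫ inv u ≫ (p ≫ s) ≫ u ≫ p := by
        rw [hup]; simp only [Category.assoc]
    _ = 𝟙 Y' := key
end
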